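/- The invariant subalgebra R₀ is isomorphic, as a ℂ-algebra, to the quotient ℂ[T₄,T₆,T₈,T₁₀,S₁₀,T₁₂]/(S₁₀² − (T₁₀² − 4T₈T₁₂)). More precisely, the ℂ-algebra homomorphism from the polynomial ring ℂ[T₄,T₆,T₈,T₁₀,S₁₀,T₁₂] to R sending T₄ ↦ t₄, T₆ ↦ t₆, T₈ ↦ t₈, T₁₀ ↦ t₁₀, S₁₀ ↦ s₁₀, T₁₂ ↦ t₁₂ has image exactly R₀ and kernel exactly the principal ideal generated by S₁₀² − (T₁₀² − 4T₈T₁₂). -/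

import Mathlib

open MvPolynomial

/-- The ℂ-algebra endomorphism `μ_λ` of `R = ℂ[u₁,…,u₆]` determined by
`u₁ ↦ λ²u₁, u₂ ↦ u₂, u₃ ↦ λ⁻²u₃, u₄ ↦ λ²u₄, u₅ ↦ u₅, u₆ ↦ λ⁻²u₆`. -/
noncomputable def mu (l : ℂˣ) : MvPolynomial (Fin 6) ℂ →ₐ[ℂ] MvPolynomial (Fin 6) ℂ :=
  aeval ![C ((l : ℂ) ^ 2) * X 0, X 1, C (((l : ℂ)⁻¹) ^ 2) * X 2,
          C ((l : ℂ) ^ 2) * X 3, X 4, C (((l : ℂ)⁻¹) ^ 2) * X 5]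

noncomputable def t4 : MvPolynomial (Fin 6) ℂ := X 1
noncomputable def t6 : MvPolynomial (Fin 6) ℂ := X 4
noncomputable def t8 : MvPolynomial (Fin 6) ℂ := X 0 * X 2
noncomputable def t10 : MvPolynomial (Fin 6) ℂ := X 0 * X 5 + X 2 * X 3
noncomputable def s10 : MvPolynomial (Fin 6) ℂ := X 0 * X 5 - X 2 * X 3
noncomputable def t12 : MvPolynomial (Fin 6) ℂ := X 3 * X 5

/-- The ℂ-algebra homomorphism `ℂ[T₄,T₆,T₈,T₁₀,S₁₀,T₁₂] → R` sending
`T₄ ↦ t₄, T₆ ↦ t₆, T₈ ↦ t₈, T₁₀ ↦ t₁₀, S₁₀ ↦ s₁₀, T₁₂ ↦ t₁₂`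
(variable indices `0,1,2,3,4,5` correspond to `T₄,T₆,T₈,T₁₀,S₁₀,T₁₂`). -/
noncomputable def phi : MvPolynomial (Fin 6) ℂ →ₐ[ℂ] MvPolynomial (Fin 6) ℂ :=
  aeval ![t4, t6, t8, t10, s10, t12]

/-! ### Auxiliary lemmas -/

@[simp] lemma IKvec6_five {α : Type*} (a b c d e f : α) : ![a,b,c,d,e,f] 5 = f := rfl

/-! #### Part A: the image is the ring of invariants -/

lemma IKmu_comp_phi (l : ℂˣ) : (mu l).comp phi = phi := by
  apply MvPolynomial.algHom_ext
  intro i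
  have hC : (C ((l:ℂ)) : MvPolynomial (Fin 6) ℂ) ^ 2 * C (((l:ℂ)^2)⁻¹) = 1 := by
    rw [← map_pow, ← C_mul]
    have : ((l:ℂ))^2 * ((l:ℂ)^2)⁻¹ = 1 := by field_simp
    rw [this, C_1]
  have v5 : ∀ {α : Type} (a b c d e f : α), ![a,b,c,d,e,f] 5 = f := fun _ _ _ _ _ _ => rfl
  fin_cases i <;> simp [phi, mu, t4, t6, t8, t10, s10, t12, v5]
  · linear_combination (X 0 * X 2 : MvPolynomial (Fin 6) ℂ) * hC
  · linear_combination (X 0 * X 5 + X 2 * X 3 : MvPolynomial (Fin 6) ℂ) * hC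
  · linear_combination (X 0 * X 5 - X 2 * X 3 : MvPolynomial (Fin 6) ℂ) * hC
  · linear_combination (X 3 * X 5 : MvPolynomial (Fin 6) ℂ) * hC

noncomputable def IKcvec (l : ℂˣ) : Fin 6 → ℂ :=
  ![(l:ℂ)^2, 1, ((l:ℂ)⁻¹)^2, (l:ℂ)^2, 1, ((l:ℂ)⁻¹)^2]

lemma IKmu_eq (l : ℂˣ) : mu l = aeval (fun i => C (IKcvec l i) * X i) := by
  unfold mu
  congr 1
  funext i
  fin_cases i <;> simp [IKcvec]

lemma IKmu_monomial (l : ℂˣ) (m : Fin 6 →₀ ℕ) (c : ℂ) :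
    mu l (monomial m c) = monomial m (c * ∏ i, IKcvec l i ^ m i) := by
  rw [IKmu_eq, aeval_monomial]
  have h1 : (m.prod fun n e => (C (IKcvec l n) * X n : MvPolynomial (Fin 6) ℂ) ^ e)
      = C (∏ i, IKcvec l i ^ m i) * m.prod fun n e => (X n : MvPolynomial (Fin 6) ℂ) ^ e := by
    rw [Finsupp.prod_fintype _ _ (by intro i; rw [pow_zero]),
        Finsupp.prod_fintype _ _ (by intro i; rw [pow_zero])]
    rw [show (∏ i, (C (IKcvec l i) * X i : MvPolynomial (Fin 6) ℂ) ^ m i)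
        = ∏ i, (C (IKcvec l i ^ m i) * (X i : MvPolynomial (Fin 6) ℂ) ^ m i) from
      Finset.prod_congr rfl fun i _ => by rw [mul_pow, map_pow]]
    rw [Finset.prod_mul_distrib, ← map_prod]
  rw [h1, monomial_eq, algebraMap_eq, ← mul_assoc, ← map_mul]

lemma IKprod_cvec (l : ℂˣ) (m : Fin 6 →₀ ℕ) :
    ∏ i, IKcvec l i ^ m i = ((l:ℂ)^2)^(m 0 + m 3) * (((l:ℂ)⁻¹)^2)^(m 2 + m 5) := by
  rw [Fin.prod_univ_six]
  simp only [IKcvec, IKvec6_five, Matrix.cons_val_zero, Matrix.cons_val_one, Matrix.head_cons,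
    Matrix.cons_val_two, Matrix.cons_val_three, Matrix.cons_val_four, Matrix.tail_cons]
  rw [one_pow, one_pow, pow_add, pow_add]
  ring

lemma IKcoeff_mu (l : ℂˣ) (f : MvPolynomial (Fin 6) ℂ) (m : Fin 6 →₀ ℕ) :
    coeff m (mu l f) = coeff m f * (((l:ℂ)^2)^(m 0 + m 3) * (((l:ℂ)⁻¹)^2)^(m 2 + m 5)) := by
  conv_lhs => rw [f.as_sum, map_sum]
  rw [Finset.sum_congr rfl (fun m' _ => by rw [IKmu_monomial, IKprod_cvec])]
  rw [coeff_sum]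
  simp only [coeff_monomial]
  rw [Finset.sum_ite_eq' f.support m]
  split_ifs with h
  · rfl
  · rw [notMem_support_iff.mp h, zero_mul]

lemma IKbalanced (f : MvPolynomial (Fin 6) ℂ)
    (hinv : mu (Units.mk0 (2:ℂ) two_ne_zero) f = f) (m : Fin 6 →₀ ℕ)
    (hm : m ∈ f.support) : m 0 + m 3 = m 2 + m 5 := by
  have h := IKcoeff_mu (Units.mk0 (2:ℂ) two_ne_zero) f m
  rw [hinv] at h
  simp only [Units.val_mk0] at h
  have hc : coeff m f ≠ 0 := mem_support_iff.mp hm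
  set a := m 0 + m 3 with ha
  set b := m 2 + m 5 with hb
  have hK : ((2:ℂ)^2)^a * (((2:ℂ)⁻¹)^2)^b = 1 := by
    have h' : coeff m f * 1 = coeff m f * (((2:ℂ)^2)^a * (((2:ℂ)⁻¹)^2)^b) := by
      rw [mul_one]
      exact h
    exact (mul_left_cancel₀ hc h').symm
  have h2 : (2:ℂ)^(2*a) = (2:ℂ)^(2*b) := by
    rw [← pow_mul, ← pow_mul, inv_pow] at hK
    field_simp at hK
    exact hK
  have h3 : ((2^(2*a) : ℕ) : ℂ) = ((2^(2*b) : ℕ) : ℂ) := by push_cast; exact_mod_cast h2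
  have h4 : (2:ℕ)^(2*a) = 2^(2*b) := Nat.cast_injective h3
  have h5 : 2*a = 2*b := Nat.pow_right_injective le_rfl h4
  omega

lemma IKtwo_C : (C (2⁻¹:ℂ) : MvPolynomial (Fin 6) ℂ) * 2 = 1 := by
  have h : ((2:MvPolynomial (Fin 6) ℂ)) = C (2:ℂ) := by push_cast; rfl
  rw [h, ← map_mul]; norm_num

lemma IKhX1 : (X 1 : MvPolynomial (Fin 6) ℂ) ∈ phi.range := ⟨X 0, by simp [phi, t4]⟩
lemma IKhX4 : (X 4 : MvPolynomial (Fin 6) ℂ) ∈ phi.range := ⟨X 1, by simp [phi, t6]⟩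
lemma IKhX02 : (X 0 * X 2 : MvPolynomial (Fin 6) ℂ) ∈ phi.range := ⟨X 2, by simp [phi, t8]⟩
lemma IKhX35 : (X 3 * X 5 : MvPolynomial (Fin 6) ℂ) ∈ phi.range := ⟨X 5, by simp [phi, t12]⟩
lemma IKhX05 : (X 0 * X 5 : MvPolynomial (Fin 6) ℂ) ∈ phi.range :=
  ⟨C (2⁻¹:ℂ) * (X 3 + X 4), by
    simp [phi, t4, t6, t8, t10, s10, t12, algebraMap_eq]
    linear_combination (X 0 * X 5 : MvPolynomial (Fin 6) ℂ) * IKtwo_C⟩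
lemma IKhX23 : (X 2 * X 3 : MvPolynomial (Fin 6) ℂ) ∈ phi.range :=
  ⟨C (2⁻¹:ℂ) * (X 3 - X 4), by
    simp [phi, t4, t6, t8, t10, s10, t12, algebraMap_eq]
    linear_combination (X 2 * X 3 : MvPolynomial (Fin 6) ℂ) * IKtwo_C⟩

lemma IKmono_split {m : Fin 6 →₀ ℕ} {i j : Fin 6} (hij : i ≠ j) (hi : 0 < m i) (hj : 0 < m j) :
    (monomial m (1:ℂ)) = (X i * X j) *
      monomial (m - (Finsupp.single i 1 + Finsupp.single j 1)) (1:ℂ) := by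
  have hle : Finsupp.single i 1 + Finsupp.single j 1 ≤ m := by
    rw [Finsupp.le_def]
    intro x
    rcases eq_or_ne x i with rfl | hxi
    · rw [Finsupp.add_apply, Finsupp.single_eq_same, Finsupp.single_eq_of_ne' (Ne.symm hij)]
      omega
    · rcases eq_or_ne x j with rfl | hxj
      · rw [Finsupp.add_apply, Finsupp.single_eq_same, Finsupp.single_eq_of_ne' hij]
        omega
      · rw [Finsupp.add_apply, Finsupp.single_eq_of_ne' (Ne.symm hxi),
          Finsupp.single_eq_of_ne' (Ne.symm hxj)]
        omega
  have hXX : (X i * X j : MvPolynomial (Fin 6) ℂ)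
      = monomial (Finsupp.single i 1 + Finsupp.single j 1) 1 := by
    rw [X, X, monomial_mul, one_mul]
  rw [hXX, monomial_mul, one_mul, add_tsub_cancel_of_le hle]

lemma IKbase_eq (m : Fin 6 →₀ ℕ) (h0 : m 0 = 0) (h2 : m 2 = 0) (h3 : m 3 = 0) (h5 : m 5 = 0) :
    m = Finsupp.single 1 (m 1) + Finsupp.single 4 (m 4) := by
  ext x
  rw [Finsupp.add_apply, Finsupp.single_apply, Finsupp.single_apply]
  fin_cases x <;> simp <;> omega

lemma IKsub_apply (m : Fin 6 →₀ ℕ) (s : Fin 6 →₀ ℕ) (x : Fin 6) : (m - s) x = m x - s x :=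
  Finsupp.tsub_apply m s x

lemma IKmono_mem : ∀ (n : ℕ) (m : Fin 6 →₀ ℕ), m 0 + m 3 ≤ n → m 0 + m 3 = m 2 + m 5 →
    (monomial m (1:ℂ)) ∈ phi.range := by
  intro n
  induction n with
  | zero =>
    intro m hle hbal
    have h0 : m 0 = 0 := by omega
    have h3 : m 3 = 0 := by omega
    have h2 : m 2 = 0 := by omega
    have h5 : m 5 = 0 := by omega
    have key : (monomial m (1:ℂ)) = X 1 ^ (m 1) * X 4 ^ (m 4) := by
      rw [X_pow_eq_monomial, X_pow_eq_monomial, monomial_mul, one_mul,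
        ← IKbase_eq m h0 h2 h3 h5]
    rw [key]
    exact mul_mem (pow_mem IKhX1 _) (pow_mem IKhX4 _)
  | succ n ih =>
    intro m hle hbal
    by_cases hn : m 0 + m 3 ≤ n
    · exact ih m hn hbal
    rcases Nat.eq_zero_or_pos (m 0) with h0 | h0
    · have h3 : 0 < m 3 := by omega
      rcases Nat.eq_zero_or_pos (m 2) with h2 | h2
      · have h5 : 0 < m 5 := by omega
        rw [IKmono_split (show (3:Fin 6) ≠ 5 by decide) h3 h5]
        refine mul_mem IKhX35 (ih _ ?_ ?_) <;>
          simp +decide [IKsub_apply, Finsupp.add_apply, Finsupp.single_apply] <;> omega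
      · rw [IKmono_split (show (2:Fin 6) ≠ 3 by decide) h2 h3]
        refine mul_mem IKhX23 (ih _ ?_ ?_) <;>
          simp +decide [IKsub_apply, Finsupp.add_apply, Finsupp.single_apply] <;> omega
    · rcases Nat.eq_zero_or_pos (m 2) with h2 | h2
      · have h5 : 0 < m 5 := by omega
        rw [IKmono_split (show (0:Fin 6) ≠ 5 by decide) h0 h5]
        refine mul_mem IKhX05 (ih _ ?_ ?_) <;>
          simp +decide [IKsub_apply, Finsupp.add_apply, Finsupp.single_apply] <;> omega
      · rw [IKmono_split (show (0:Fin 6) ≠ 2 by decide) h0 h2]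
        refine mul_mem IKhX02 (ih _ ?_ ?_) <;>
          simp +decide [IKsub_apply, Finsupp.add_apply, Finsupp.single_apply] <;> omega

/-! #### Part B: the kernel -/

noncomputable def ee : MvPolynomial (Fin 6) ℂ ≃ₐ[ℂ] Polynomial (MvPolynomial (Fin 5) ℂ) :=
  (renameEquiv ℂ (Equiv.swap (0 : Fin 6) 4)).trans (finSuccEquiv ℂ 5)

noncomputable def gg : MvPolynomial (Fin 6) ℂ := (X 4)^2 - ((X 3)^2 - 4 * X 2 * X 5)
noncomputable def D5 : MvPolynomial (Fin 5) ℂ := (X 2)^2 - 4 * X 1 * X 4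
noncomputable def GG : Polynomial (MvPolynomial (Fin 5) ℂ) := Polynomial.X^2 - Polynomial.C D5

lemma IKee_g : ee gg = GG := by
  unfold ee gg GG D5
  rw [AlgEquiv.trans_apply]
  simp only [renameEquiv_apply, map_sub, map_mul, map_pow, map_ofNat, rename_X]
  rw [show (Equiv.swap (0:Fin 6) 4) 4 = 0 by decide,
      show (Equiv.swap (0:Fin 6) 4) 3 = (2:Fin 5).succ by decide,
      show (Equiv.swap (0:Fin 6) 4) 2 = (1:Fin 5).succ by decide,
      show (Equiv.swap (0:Fin 6) 4) 5 = (4:Fin 5).succ by decide]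
  simp only [finSuccEquiv_X_zero, finSuccEquiv_X_succ, map_sub, map_mul, map_pow, map_ofNat]

lemma IKGG_monic : GG.Monic := Polynomial.monic_X_pow_sub_C D5 (by norm_num)
lemma IKGG_deg : GG.degree = 2 := Polynomial.degree_X_pow_sub_C (by norm_num) D5

noncomputable def hfun : Fin 5 → Fin 6 := ![1, 2, 3, 0, 5]
noncomputable def iota : MvPolynomial (Fin 5) ℂ →ₐ[ℂ] MvPolynomial (Fin 6) ℂ := rename hfun

lemma IKfse_rename_succ (p : MvPolynomial (Fin 5) ℂ) :
    finSuccEquiv ℂ 5 (rename Fin.succ p) = Polynomial.C p := by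
  induction p using MvPolynomial.induction_on with
  | C r => simp [finSuccEquiv_apply]
  | add p q hp hq => simp [map_add, hp, hq]
  | mul_X p i hp => simp [map_mul, hp, finSuccEquiv_X_succ]

lemma IKee_iota (p : MvPolynomial (Fin 5) ℂ) : ee (iota p) = Polynomial.C p := by
  unfold ee iota
  rw [AlgEquiv.trans_apply, renameEquiv_apply, rename_rename]
  rw [show ((Equiv.swap (0:Fin 6) 4) ∘ hfun) = Fin.succ by funext i; fin_cases i <;> decide]
  exact IKfse_rename_succ p

lemma IKee_X4 : ee (X 4) = Polynomial.X := by
  unfold ee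
  rw [AlgEquiv.trans_apply, renameEquiv_apply, rename_X,
    show (Equiv.swap (0:Fin 6) 4) 4 = 0 by decide, finSuccEquiv_X_zero]

lemma IKphi_g : phi gg = 0 := by
  have v5 : ∀ {α : Type} (a b c d e f : α), ![a,b,c,d,e,f] 5 = f := fun _ _ _ _ _ _ => rfl
  simp [gg, phi, t4, t6, t8, t10, s10, t12, v5, map_ofNat]
  ring

lemma IKphi_X4 : phi (X 4) = s10 := by simp [phi]

lemma IKeval_aeval {σ : Type*} (u : Fin 6 → ℂ) (v : σ → MvPolynomial (Fin 6) ℂ)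
    (p : MvPolynomial σ ℂ) :
    eval u (aeval v p) = eval (fun i => eval u (v i)) p := by
  induction p using MvPolynomial.induction_on with
  | C => simp
  | add p q hp hq => simp only [map_add, hp, hq]
  | mul_X p i hp => simp only [map_mul, aeval_X, eval_X, hp]

noncomputable def wvec (u : Fin 6 → ℂ) : Fin 5 → ℂ :=
  ![u 4, u 0 * u 2, u 0 * u 5 + u 2 * u 3, u 1, u 3 * u 5]

lemma IKheval (u : Fin 6 → ℂ) (p : MvPolynomial (Fin 5) ℂ) :
    eval u (phi (iota p)) = eval (wvec u) p := by
  unfold phi iota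
  rw [aeval_rename, IKeval_aeval]
  have hw : (fun i => eval u ((![t4, t6, t8, t10, s10, t12] ∘ hfun) i)) = wvec u := by
    funext i
    fin_cases i <;>
      simp [hfun, t4, t6, t8, t10, s10, t12, wvec, Function.comp]
  rw [hw]

lemma IKexists_point (v : Fin 5 → ℂ) (s : ℂ) (hs : s^2 = (v 2)^2 - 4 * v 1 * v 4) :
    ∃ u : Fin 6 → ℂ, wvec u = v ∧ u 0 * u 5 - u 2 * u 3 = s := by
  have key : ∀ w : Fin 6 → ℂ, (w 4 = v 0 → w 0 * w 2 = v 1 → w 0 * w 5 + w 2 * w 3 = v 2 →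
      w 1 = v 3 → w 3 * w 5 = v 4 → w 0 * w 5 - w 2 * w 3 = s →
      ∃ u : Fin 6 → ℂ, wvec u = v ∧ u 0 * u 5 - u 2 * u 3 = s) := by
    intro w h0 h1 h2 h3 h4 h5
    refine ⟨w, funext fun i => ?_, h5⟩
    fin_cases i <;> simpa [wvec]
  by_cases h1 : v 1 ≠ 0
  · apply key ![1, v 3, v 1, (v 2 - s)/(2 * v 1), v 0, (v 2 + s)/2] <;> simp <;> field_simp <;>
      first
      | ring1
      | linear_combination hs
      | linear_combination -hs
  · push_neg at h1
    have hpq : ((v 2 + s)/2) * ((v 2 - s)/2) = 0 := by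
      field_simp
      linear_combination -hs + 4 * v 4 * h1
    rcases mul_eq_zero.mp hpq with hp0 | hq0
    · apply key ![0, v 3, (v 2 - s)/2, 1, v 0, v 4] <;> simp [h1] <;>
        first
        | ring1
        | linear_combination hp0
        | linear_combination -hp0
        | linear_combination 2 * hp0
        | linear_combination -2 * hp0
    · apply key ![(v 2 + s)/2, v 3, 0, v 4, v 0, 1] <;> simp [h1] <;>
        first
        | ring1
        | linear_combination hq0
        | linear_combination -hq0
        | linear_combination 2 * hq0
        | linear_combination -2 * hq0

lemma IKdeg_le_one {r : Polynomial (MvPolynomial (Fin 5) ℂ)} (h : r.degree < 2) :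
    r.degree ≤ 1 := by
  rcases hd : r.degree with _ | n
  · exact bot_le
  · rw [hd] at h
    have h' : ((n : ℕ) : WithBot ℕ) < 2 := h
    have h3 : n < 2 := by exact_mod_cast h'
    show ((n : ℕ) : WithBot ℕ) ≤ 1
    exact_mod_cast (by omega : n ≤ 1)

lemma IKD5_ne : (D5 : MvPolynomial (Fin 5) ℂ) ≠ 0 := by
  intro h
  have h2 := congrArg (eval ![0, 0, 1, 0, 0]) h
  simp [D5] at h2

lemma IKg_dvd (f : MvPolynomial (Fin 6) ℂ) (hf : phi f = 0) : gg ∣ f := by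
  set F := ee f with hF
  set q5 := F /ₘ GG with hq5
  set rm := F %ₘ GG with hrm5
  have hdeg : rm.degree ≤ 1 :=
    IKdeg_le_one (by rw [← IKGG_deg]; exact Polynomial.degree_modByMonic_lt F IKGG_monic)
  set a := rm.coeff 0 with ha0
  set b := rm.coeff 1 with hb0
  have hrm : rm = Polynomial.C b * Polynomial.X + Polynomial.C a :=
    Polynomial.eq_X_add_C_of_degree_le_one hdeg
  have hfe : f = gg * ee.symm q5 + (iota b * X 4 + iota a) := by
    apply ee.injective
    rw [map_add, map_mul, IKee_g, AlgEquiv.apply_symm_apply, map_add, map_mul,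
      IKee_iota, IKee_iota, IKee_X4, ← hrm]
    rw [← hF, add_comm]
    exact (Polynomial.modByMonic_add_div F GG).symm
  have h0 : phi (iota b) * s10 + phi (iota a) = 0 := by
    have := hf
    rw [hfe, map_add, map_mul, IKphi_g, zero_mul, zero_add, map_add, map_mul, IKphi_X4] at this
    exact this
  have hpt : ∀ u : Fin 6 → ℂ,
      eval (wvec u) b * (u 0 * u 5 - u 2 * u 3) + eval (wvec u) a = 0 := by
    intro u
    have h2 := congrArg (eval u) h0
    rw [map_add, map_mul, IKheval, IKheval, map_zero] at h2
    have hseval : eval u s10 = u 0 * u 5 - u 2 * u 3 := by simp [s10]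
    rw [hseval] at h2
    exact h2
  have key : ∀ v : Fin 5 → ℂ,
      eval v a = 0 ∧ (eval v b)^2 * ((v 2)^2 - 4 * v 1 * v 4) = 0 := by
    intro v
    obtain ⟨s, hs⟩ := IsAlgClosed.exists_pow_nat_eq ((v 2)^2 - 4 * v 1 * v 4) zero_lt_two
    obtain ⟨u, hu, hsu⟩ := IKexists_point v s hs
    obtain ⟨u', hu', hsu'⟩ := IKexists_point v (-s) (by rw [neg_pow]; simpa using hs)
    have e1 := hpt u
    rw [hu, hsu] at e1
    have e2 := hpt u'
    rw [hu', hsu'] at e2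
    have hA : eval v a = 0 := by linear_combination (e1 + e2) / 2
    refine ⟨hA, ?_⟩
    have hB : eval v b * s = 0 := by linear_combination e1 - hA
    calc (eval v b)^2 * ((v 2)^2 - 4 * v 1 * v 4) = (eval v b * s)^2 := by
          rw [← hs]; ring
      _ = 0 := by rw [hB]; ring
  have ha : a = 0 := MvPolynomial.funext fun v => by
    rw [(key v).1, map_zero]
  have hb2 : b^2 * D5 = 0 := MvPolynomial.funext fun v => by
    have := (key v).2
    simp only [map_mul, map_pow, map_sub, eval_X, map_ofNat, D5, map_zero]
    convert this using 2 <;> simp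
  have hb : b = 0 := by
    rcases mul_eq_zero.mp hb2 with h | h
    · exact pow_eq_zero_iff (two_ne_zero) |>.mp h
    · exact absurd h IKD5_ne
  have hrm0 : rm = 0 := by rw [hrm, ha, hb]; simp
  refine ⟨ee.symm q5, ?_⟩
  apply ee.injective
  rw [map_mul, IKee_g, AlgEquiv.apply_symm_apply, ← hF]
  have := Polynomial.modByMonic_add_div F GG
  rw [← hrm5, hrm0, zero_add] at this
  exact this.symm

theorem image_and_kernel_of_phi :
    (∀ f : MvPolynomial (Fin 6) ℂ, f ∈ phi.range ↔ ∀ l : ℂˣ, mu l f = f) ∧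
    RingHom.ker (phi : MvPolynomial (Fin 6) ℂ →+* MvPolynomial (Fin 6) ℂ) =
      Ideal.span {(X 4) ^ 2 - ((X 3) ^ 2 - 4 * X 2 * X 5)} := by
  constructor
  · intro f
    constructor
    · rintro ⟨p, rfl⟩ l
      exact AlgHom.congr_fun (IKmu_comp_phi l) p
    · intro hinv
      rw [f.as_sum]
      apply Subalgebra.sum_mem
      intro m hm
      have hbal : m 0 + m 3 = m 2 + m 5 :=
        IKbalanced f (hinv (Units.mk0 (2:ℂ) two_ne_zero)) m hm
      have hsplit : (monomial m (coeff m f)) = C (coeff m f) * monomial m 1 := by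
        rw [C_mul_monomial, mul_one]
      rw [hsplit]
      have hCmem : (C (coeff m f) : MvPolynomial (Fin 6) ℂ) ∈ phi.range := by
        rw [← algebraMap_eq]
        exact Subalgebra.algebraMap_mem _ _
      exact mul_mem hCmem (IKmono_mem (m 0 + m 3) m le_rfl hbal)
  · have hgg : ((X 4) ^ 2 - ((X 3) ^ 2 - 4 * X 2 * X 5) : MvPolynomial (Fin 6) ℂ) = gg := rfl
    rw [hgg]
    apply le_antisymm
    · intro f hf
      exact Ideal.mem_span_singleton.mpr (IKg_dvd f (RingHom.mem_ker.mp hf))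
    · rw [Ideal.span_le, Set.singleton_subset_iff]
      simp only [SetLike.mem_coe, RingHom.mem_ker]
      exact IKphi_g
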